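/- One has ∫_{−1}^{1} Φ_{00}(x) dx = 1, and for all natural numbers i, i' with i + i' ≥ 1 and every natural number k with 0 ≤ k ≤ i + i' − 1, ∫_{−1}^{1} x^k Φ_{ii'}(x) dx = 0. -/

import Mathlib

open Real MeasureTheory

/-- The degree-`k` Legendre polynomial via the Rodrigues formula
`P_k(t) = (1/(2^k k!)) (d/dt)^k (t² - 1)^k`. -/
noncomputable def legendreP (k : ℕ) (t : ℝ) : ℝ :=
  (1 / ((2 : ℝ) ^ k * (Nat.factorial k : ℝ))) *
    (Polynomial.derivative^[k] (((Polynomial.X : Polynomial ℝ) ^ 2 - 1) ^ k)).eval t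

/-- The scaling functions `φ_k(x) = √(2k+1) P_k(2x-1)` on `[0,1]`, extended by zero. -/
noncomputable def scalingFn (k : ℕ) (x : ℝ) : ℝ :=
  if x ∈ Set.Icc (0:ℝ) 1 then Real.sqrt (2 * (k : ℝ) + 1) * legendreP k (2 * x - 1) else 0

/-- The cross-correlation functions `Φ_{ii'}(x) = ∫ φ_i(x+y) φ_{i'}(y) dy`. -/
noncomputable def crossCorr (i i' : ℕ) (x : ℝ) : ℝ :=
  ∫ y : ℝ, scalingFn i (x + y) * scalingFn i' y

open Polynomial Finset in
/-- Boundary vanishing of the iterated derivatives of `(X² - 1)^k`. -/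
lemma vm_iter_deriv_boundary (k m : ℕ) (hm : m < k) (t : ℝ) (ht : t = 1 ∨ t = -1) :
    (derivative^[m] (((X : ℝ[X]) ^ 2 - 1) ^ k)).eval t = 0 := by
  have hdvd : (X - C t) ∣ ((X : ℝ[X]) ^ 2 - 1) := by
    rw [dvd_iff_isRoot]; rcases ht with h | h <;> simp [IsRoot, h]
  have h2 : (X - C t) ^ (k - m) ∣ derivative^[m] (((X : ℝ[X]) ^ 2 - 1) ^ k) :=
    Polynomial.pow_sub_dvd_iterate_derivative_of_pow_dvd m (pow_dvd_pow_of_dvd hdvd k)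
  have h3 : (X - C t) ∣ derivative^[m] (((X : ℝ[X]) ^ 2 - 1) ^ k) :=
    dvd_trans (dvd_pow_self _ (Nat.sub_ne_zero_of_lt hm)) h2
  exact dvd_iff_isRoot.mp h3

open Polynomial in
/-- FTC for polynomials. -/
lemma vm_poly_integral (p : ℝ[X]) (a b : ℝ) :
    ∫ t in a..b, (derivative p).eval t = p.eval b - p.eval a := by
  have h1 : deriv (fun x : ℝ => p.eval x) = fun x => (derivative p).eval x := by
    funext x; exact Polynomial.deriv (p := p)
  exact intervalIntegral.integral_deriv_eq_sub' (fun x : ℝ => p.eval x) h1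
      (fun x _ => p.differentiableAt) ((Polynomial.continuous _).continuousOn)

open Polynomial in
/-- Repeated integration by parts: the moments of `(d/dt)^m (t²-1)^k` of order `< m` vanish. -/
lemma vm_key_ibp (k : ℕ) : ∀ m, m ≤ k → ∀ p : ℝ[X], p.natDegree < m →
    (∫ t in (-1:ℝ)..1, p.eval t * (derivative^[m] (((X : ℝ[X]) ^ 2 - 1) ^ k)).eval t) = 0 := by
  intro m
  induction m with
  | zero => intro _ p hp; exact absurd hp (Nat.not_lt_zero _)
  | succ m ih =>
    intro hm p hp
    set Q : ℝ[X] := ((X : ℝ[X]) ^ 2 - 1) ^ k with hQ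
    have hbd : ∀ t : ℝ, t = 1 ∨ t = -1 → (derivative^[m] Q).eval t = 0 :=
      fun t ht => vm_iter_deriv_boundary k m (lt_of_lt_of_le (Nat.lt_succ_self m) hm) t ht
    have hsplit : ∀ t : ℝ, p.eval t * (derivative^[m+1] Q).eval t =
        (derivative (p * derivative^[m] Q)).eval t
          - (derivative p).eval t * (derivative^[m] Q).eval t := by
      intro t
      rw [Function.iterate_succ_apply', derivative_mul]
      simp only [eval_add, eval_mul]
      ring
    rw [intervalIntegral.integral_congr (fun t _ => hsplit t)]
    rw [intervalIntegral.integral_sub, vm_poly_integral]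
    · rw [eval_mul, eval_mul, hbd 1 (Or.inl rfl), hbd (-1) (Or.inr rfl)]
      by_cases hp0 : derivative p = 0
      · simp [hp0]
      · have : (derivative p).natDegree < m := by
          have h1 := Polynomial.natDegree_derivative_lt (p := p) ?_
          · omega
          · intro h; apply hp0; rw [Polynomial.eq_C_of_natDegree_eq_zero h]; simp
        rw [ih (le_of_lt (Nat.lt_of_succ_le hm)) _ this]
        simp
    · exact (Polynomial.continuous _).intervalIntegrable _ _
    · exact ((Polynomial.continuous (derivative p)).mul
        (Polynomial.continuous _)).intervalIntegrable _ _

lemma vm_continuous_G (k : ℕ) :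
    Continuous (fun x : ℝ => Real.sqrt (2 * (k:ℝ) + 1) * legendreP k (2 * x - 1)) := by
  unfold legendreP
  exact continuous_const.mul (continuous_const.mul
    ((Polynomial.continuous _).comp (by continuity)))

lemma vm_scalingFn_eq_indicator (k : ℕ) :
    scalingFn k = (Set.Icc (0:ℝ) 1).indicator
      (fun x => Real.sqrt (2 * (k:ℝ) + 1) * legendreP k (2 * x - 1)) := by
  funext x; simp [scalingFn, Set.indicator]

lemma vm_measurable_scalingFn (k : ℕ) : Measurable (scalingFn k) := by
  rw [vm_scalingFn_eq_indicator]
  exact ((vm_continuous_G k).measurable).indicator measurableSet_Icc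

lemma vm_scalingFn_eq_zero {k : ℕ} {x : ℝ} (hx : x ∉ Set.Icc (0:ℝ) 1) : scalingFn k x = 0 := by
  simp [scalingFn, hx]

lemma vm_scalingFn_bound (k : ℕ) : ∃ C : ℝ, 0 ≤ C ∧ ∀ x, |scalingFn k x| ≤ C := by
  obtain ⟨z, hz, hmax⟩ := isCompact_Icc.exists_isMaxOn
    (Set.nonempty_Icc.2 zero_le_one)
    (continuous_abs.comp (vm_continuous_G k)).continuousOn
  refine ⟨|Real.sqrt (2 * (k:ℝ) + 1) * legendreP k (2 * z - 1)|, abs_nonneg _, fun x => ?_⟩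
  by_cases hx : x ∈ Set.Icc (0:ℝ) 1
  · rw [scalingFn, if_pos hx]; exact hmax hx
  · rw [vm_scalingFn_eq_zero hx, abs_zero]; exact abs_nonneg _

lemma vm_integrable_pow_mul (i j : ℕ) :
    Integrable (fun x : ℝ => x ^ j * scalingFn i x) := by
  obtain ⟨C, hC0, hC⟩ := vm_scalingFn_bound i
  refine Integrable.mono' (g := (Set.Icc (0:ℝ) 1).indicator (fun _ => C)) ?_ ?_ ?_
  · exact (integrableOn_const (by simp)).integrable_indicator measurableSet_Icc
  · exact ((measurable_id.pow_const j).mul (vm_measurable_scalingFn i)).aestronglyMeasurable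
  · refine Filter.Eventually.of_forall (fun x => ?_)
    by_cases hx : x ∈ Set.Icc (0:ℝ) 1
    · rw [Set.indicator_of_mem hx]
      calc ‖x ^ j * scalingFn i x‖ = |x| ^ j * |scalingFn i x| := by
            rw [norm_mul, Real.norm_eq_abs, Real.norm_eq_abs, abs_pow]
        _ ≤ 1 * C := by
            apply mul_le_mul (pow_le_one₀ (abs_nonneg _) (abs_le.2 ⟨by linarith [hx.1], hx.2⟩))
              (hC x) (abs_nonneg _) zero_le_one
        _ = C := one_mul C
    · rw [Set.indicator_of_notMem hx, vm_scalingFn_eq_zero hx, mul_zero, norm_zero]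

open Polynomial in
/-- Vanishing of the moments of `scalingFn i` of order `< i`. -/
lemma vm_moment_vanish (i j : ℕ) (hj : j < i) :
    (∫ x : ℝ, x ^ j * scalingFn i x) = 0 := by
  have h0 : (∫ x : ℝ, x ^ j * scalingFn i x)
      = ∫ x in (0:ℝ)..1, x ^ j * (Real.sqrt (2 * (i:ℝ) + 1) * legendreP i (2 * x - 1)) := by
    rw [← setIntegral_eq_integral_of_forall_compl_eq_zero
      (s := Set.Icc (0:ℝ) 1) (fun x hx => by rw [vm_scalingFn_eq_zero hx, mul_zero]),
      integral_Icc_eq_integral_Ioc, ← intervalIntegral.integral_of_le zero_le_one]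
    refine intervalIntegral.integral_congr (fun x hx => ?_)
    rw [Set.uIcc_of_le zero_le_one] at hx
    rw [scalingFn, if_pos hx]
  rw [h0]
  set A : ℝ := Real.sqrt (2 * (i:ℝ) + 1) * (1 / ((2 : ℝ) ^ i * (Nat.factorial i : ℝ))) with hA
  have h1 : (∫ x in (0:ℝ)..1, x ^ j * (Real.sqrt (2 * (i:ℝ) + 1) * legendreP i (2 * x - 1)))
      = A * ∫ x in (0:ℝ)..1,
          x ^ j * (derivative^[i] (((X : ℝ[X]) ^ 2 - 1) ^ i)).eval (2 * x - 1) := by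
    rw [← intervalIntegral.integral_const_mul]
    refine intervalIntegral.integral_congr (fun x _ => ?_)
    rw [legendreP, hA]; ring
  rw [h1]
  set p : ℝ[X] := (Polynomial.C (2:ℝ)⁻¹ * (X + 1)) ^ j with hp
  have hpeval : ∀ t : ℝ, p.eval t = ((t + 1) / 2) ^ j := by
    intro t; rw [hp]; simp [eval_pow]; ring_nf
  set f : ℝ → ℝ := fun t => p.eval t * (derivative^[i] (((X : ℝ[X]) ^ 2 - 1) ^ i)).eval t with hf
  have h2 : (∫ x in (0:ℝ)..1,
        x ^ j * (derivative^[i] (((X : ℝ[X]) ^ 2 - 1) ^ i)).eval (2 * x - 1))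
      = ∫ x in (0:ℝ)..1, f (2 * x + (-1)) := by
    refine intervalIntegral.integral_congr (fun x _ => ?_)
    show x ^ j * _ = p.eval (2 * x + -1) * _
    rw [show (2 * x + (-1) : ℝ) = 2 * x - 1 by ring, hpeval,
      show ((2 * x - 1 + 1) / 2 : ℝ) = x by ring]
  rw [h2, intervalIntegral.integral_comp_mul_add f two_ne_zero (-1)]
  have hdeg : p.natDegree < i := by
    have h3 : p.natDegree ≤ j * (Polynomial.C (2:ℝ)⁻¹ * (X + 1)).natDegree :=
      Polynomial.natDegree_pow_le
    have h4 : (Polynomial.C (2:ℝ)⁻¹ * (X + 1)).natDegree ≤ 1 := by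
      refine le_trans (Polynomial.natDegree_C_mul_le _ _) ?_
      have : ((X : ℝ[X]) + 1) = X + Polynomial.C 1 := by simp
      rw [this, Polynomial.natDegree_X_add_C]
    calc p.natDegree ≤ j * 1 := le_trans h3 (Nat.mul_le_mul_left j h4)
      _ = j := Nat.mul_one j
      _ < i := hj
  have e1 : (2 * (0:ℝ) + -1) = -1 := by norm_num
  have e2 : (2 * (1:ℝ) + -1) = 1 := by norm_num
  rw [e1, e2, vm_key_ibp i i le_rfl p hdeg]
  simp

lemma vm_legendreP_zero (t : ℝ) : legendreP 0 t = 1 := by simp [legendreP]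

lemma vm_moment_unit : (∫ x : ℝ, scalingFn 0 x) = 1 := by
  have h : (∫ x : ℝ, scalingFn 0 x)
      = ∫ x : ℝ, (Set.Icc (0:ℝ) 1).indicator (fun _ => (1:ℝ)) x := by
    congr 1; funext x; simp [scalingFn, Set.indicator, vm_legendreP_zero]
  rw [h, MeasureTheory.integral_indicator measurableSet_Icc]
  simp

lemma vm_crossCorr_zero (i i' : ℕ) {x : ℝ} (hx : x ∉ Set.Ioo (-1:ℝ) 1) :
    crossCorr i i' x = 0 := by
  unfold crossCorr
  refine integral_eq_zero_of_ae ?_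
  rw [Set.mem_Ioo, not_and_or, not_lt, not_lt] at hx
  rw [Filter.EventuallyEq, ae_iff]
  rcases hx with h | h
  · -- x ≤ -1 : nonzero set ⊆ Icc (-x) 1, which is null
    have hnull : volume (Set.Icc (-x) (1:ℝ)) = 0 := by
      rw [Real.volume_Icc, ENNReal.ofReal_eq_zero]; linarith
    refine measure_mono_null (fun y hy => ?_) hnull
    simp only [Set.mem_setOf_eq, Pi.zero_apply] at hy
    have h1 : x + y ∈ Set.Icc (0:ℝ) 1 := by
      by_contra hc; exact hy (by rw [vm_scalingFn_eq_zero hc, zero_mul])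
    have h2 : y ∈ Set.Icc (0:ℝ) 1 := by
      by_contra hc; exact hy (by rw [vm_scalingFn_eq_zero hc, mul_zero])
    exact ⟨by linarith [h1.1], h2.2⟩
  · -- 1 ≤ x : nonzero set ⊆ Icc 0 (1 - x), which is null
    have hnull : volume (Set.Icc (0:ℝ) (1 - x)) = 0 := by
      rw [Real.volume_Icc, ENNReal.ofReal_eq_zero]; linarith
    refine measure_mono_null (fun y hy => ?_) hnull
    simp only [Set.mem_setOf_eq, Pi.zero_apply] at hy
    have h1 : x + y ∈ Set.Icc (0:ℝ) 1 := by
      by_contra hc; exact hy (by rw [vm_scalingFn_eq_zero hc, zero_mul])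
    have h2 : y ∈ Set.Icc (0:ℝ) 1 := by
      by_contra hc; exact hy (by rw [vm_scalingFn_eq_zero hc, mul_zero])
    exact ⟨h2.1, by linarith [h1.2]⟩

open Finset in
lemma vm_main_eq (i i' k : ℕ) :
    (∫ x in (-1:ℝ)..1, x ^ k * crossCorr i i' x) =
    ∑ m ∈ Finset.range (k+1), ((-1:ℝ)) ^ (m+k) * (k.choose m : ℝ) *
      (∫ u : ℝ, u ^ m * scalingFn i u) * (∫ y : ℝ, y ^ (k-m) * scalingFn i' y) := by
  -- extend to the whole line
  rw [intervalIntegral.integral_of_le (by norm_num : (-1:ℝ) ≤ 1),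
      MeasureTheory.integral_Ioc_eq_integral_Ioo,
      setIntegral_eq_integral_of_forall_compl_eq_zero
        (fun x hx => by rw [vm_crossCorr_zero i i' hx, mul_zero])]
  -- integrability on the product space
  obtain ⟨Ci, hCi0, hCi⟩ := vm_scalingFn_bound i
  obtain ⟨Ci', hCi'0, hCi'⟩ := vm_scalingFn_bound i'
  have hF : Integrable
      (Function.uncurry fun x y : ℝ => x ^ k * (scalingFn i (x+y) * scalingFn i' y))
      (volume.prod volume) := by
    refine Integrable.mono'
      (g := (Set.Icc (-1:ℝ) 1 ×ˢ Set.Icc (0:ℝ) 1).indicator fun _ => Ci * Ci') ?_ ?_ ?_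
    · refine (integrableOn_const (ne_of_lt ?_)).integrable_indicator
        (measurableSet_Icc.prod measurableSet_Icc)
      exact (isCompact_Icc.prod isCompact_Icc).measure_lt_top
    · exact ((measurable_fst.pow_const k).mul
        (((vm_measurable_scalingFn i).comp (measurable_fst.add measurable_snd)).mul
          ((vm_measurable_scalingFn i').comp measurable_snd))).aestronglyMeasurable
    · refine Filter.Eventually.of_forall fun z => ?_
      by_cases hz : z ∈ Set.Icc (-1:ℝ) 1 ×ˢ Set.Icc (0:ℝ) 1
      · rw [Set.indicator_of_mem hz]
        obtain ⟨hz1, hz2⟩ := hz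
        calc ‖Function.uncurry (fun x y : ℝ => x ^ k * (scalingFn i (x+y) * scalingFn i' y)) z‖
            = |z.1| ^ k * (|scalingFn i (z.1 + z.2)| * |scalingFn i' z.2|) := by
              simp [Function.uncurry, abs_mul, abs_pow]
          _ ≤ 1 * (Ci * Ci') := by
              refine mul_le_mul (pow_le_one₀ (abs_nonneg _)
                (abs_le.2 ⟨hz1.1, hz1.2⟩)) ?_ (by positivity) zero_le_one
              exact mul_le_mul (hCi _) (hCi' _) (abs_nonneg _) hCi0
          _ = Ci * Ci' := one_mul _
      · rw [Set.indicator_of_notMem hz]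
        rw [Set.mem_prod, not_and_or] at hz
        have hzero : Function.uncurry
            (fun x y : ℝ => x ^ k * (scalingFn i (x+y) * scalingFn i' y)) z = 0 := by
          rcases hz with h | h
          · by_cases h2 : z.2 ∈ Set.Icc (0:ℝ) 1
            · have hout : z.1 + z.2 ∉ Set.Icc (0:ℝ) 1 := by
                simp only [Set.mem_Icc, not_and_or, not_le] at h ⊢
                rcases h with h | h
                · left; linarith [h2.2]
                · right; linarith [h2.1]
              simp [Function.uncurry, vm_scalingFn_eq_zero hout]
            · simp [Function.uncurry, vm_scalingFn_eq_zero h2]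
          · simp [Function.uncurry, vm_scalingFn_eq_zero h]
        rw [hzero, norm_zero]
  -- Fubini
  have hswap : (∫ x : ℝ, x ^ k * crossCorr i i' x)
      = ∫ y : ℝ, ∫ x : ℝ, x ^ k * (scalingFn i (x+y) * scalingFn i' y) := by
    rw [← MeasureTheory.integral_integral_swap hF]
    congr 1; funext x
    rw [crossCorr, ← MeasureTheory.integral_const_mul]
  rw [hswap]
  -- inner integral: translation and binomial expansion
  have key : ∀ y : ℝ, (∫ x : ℝ, x ^ k * (scalingFn i (x+y) * scalingFn i' y))
      = ∑ m ∈ Finset.range (k+1),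
          ((-1:ℝ)) ^ (m+k) * (k.choose m : ℝ) * (∫ u : ℝ, u ^ m * scalingFn i u)
            * (y ^ (k-m) * scalingFn i' y) := by
    intro y
    have ht : (∫ x : ℝ, x ^ k * (scalingFn i (x+y) * scalingFn i' y))
        = ∫ u : ℝ, (u - y) ^ k * (scalingFn i u * scalingFn i' y) := by
      rw [← MeasureTheory.integral_add_right_eq_self
        (fun u : ℝ => (u - y) ^ k * (scalingFn i u * scalingFn i' y)) y]
      congr 1; funext x; rw [add_sub_cancel_right]
    rw [ht]
    have hexp : ∀ u : ℝ, (u - y) ^ k * (scalingFn i u * scalingFn i' y)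
        = ∑ m ∈ Finset.range (k+1),
            ((-1:ℝ)) ^ (m+k) * (k.choose m : ℝ) * (y ^ (k-m) * scalingFn i' y)
              * (u ^ m * scalingFn i u) := by
      intro u; rw [sub_pow, Finset.sum_mul]
      exact Finset.sum_congr rfl fun m _ => by ring
    simp only [hexp]
    rw [MeasureTheory.integral_finset_sum _
      (fun m _ => (vm_integrable_pow_mul i m).const_mul _)]
    refine Finset.sum_congr rfl fun m _ => ?_
    rw [MeasureTheory.integral_const_mul]; ring
  simp only [key]
  rw [MeasureTheory.integral_finset_sum _
    (fun m _ => (vm_integrable_pow_mul i' (k-m)).const_mul _)]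
  refine Finset.sum_congr rfl fun m _ => ?_
  rw [MeasureTheory.integral_const_mul]

/-- Vanishing moments: `∫_{-1}^{1} Φ_{00}(x) dx = 1` and, for `i + i' ≥ 1`,
`∫_{-1}^{1} x^k Φ_{ii'}(x) dx = 0` for `0 ≤ k ≤ i + i' - 1`. -/
theorem crossCorr_vanishing_moments :
    (∫ x in (-1:ℝ)..1, crossCorr 0 0 x) = 1 ∧
    (∀ i i' k : ℕ, 1 ≤ i + i' → k ≤ i + i' - 1 →
      (∫ x in (-1:ℝ)..1, x ^ k * crossCorr i i' x) = 0) := by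
  constructor
  · rw [show (∫ x in (-1:ℝ)..1, crossCorr 0 0 x)
        = ∫ x in (-1:ℝ)..1, x ^ 0 * crossCorr 0 0 x from
      intervalIntegral.integral_congr fun x _ => by ring]
    rw [vm_main_eq 0 0 0, Finset.sum_range_one]
    simp only [pow_zero, one_mul, Nat.choose_self, Nat.cast_one, Nat.zero_sub]
    rw [vm_moment_unit]; norm_num
  · intro i i' k h1 h2
    rw [vm_main_eq i i' k]
    refine Finset.sum_eq_zero fun m hm => ?_
    rw [Finset.mem_range] at hm
    by_cases hmi : m < i
    · rw [vm_moment_vanish i m hmi]; ring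
    · have hlt : k - m < i' := by omega
      rw [vm_moment_vanish i' (k-m) hlt]; ring
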